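/- Let E ∈ ℝ^{n×d} have full column rank, and let Φ̂ ∈ S^{d+T} be partitioned with Φ̂_{22} < 0. Define Φ ∈ S^{n+T} by Φ_{11} = E Φ̂_{11} Eᵀ, Φ_{12} = E Φ̂_{12}, Φ_{22} = Φ̂_{22}. Then a matrix W ∈ ℝ^{n×T} satisfies W = E Ŵ for some Ŵ ∈ ℝ^{d×T} with [I; Ŵᵀ]ᵀ Φ̂ [I; Ŵᵀ] ≥ 0 if and only if [I; Wᵀ]ᵀ Φ [I; Wᵀ] ≥ 0. -/

import Mathlib

open scoped Matrix

private lemma qmi_expand' {m T : ℕ} (A : Matrix (Fin m) (Fin m) ℝ) (B : Matrix (Fin m) (Fin T) ℝ)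
    (C : Matrix (Fin T) (Fin m) ℝ) (D : Matrix (Fin T) (Fin T) ℝ)
    (V : Matrix (Fin m) (Fin T) ℝ) :
    (Matrix.fromRows (1 : Matrix (Fin m) (Fin m) ℝ) Vᵀ)ᵀ *
      Matrix.fromBlocks A B C D *
      Matrix.fromRows (1 : Matrix (Fin m) (Fin m) ℝ) Vᵀ
    = A + B * Vᵀ + V * C + V * D * Vᵀ := by
  rw [Matrix.transpose_fromRows, Matrix.mul_assoc, Matrix.fromBlocks_mul_fromRows,
    Matrix.fromCols_mul_fromRows]
  simp [Matrix.mul_add, Matrix.mul_assoc, add_assoc]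

private lemma dot_shift' {a b : ℕ} (A : Matrix (Fin a) (Fin b) ℝ) (x : Fin a → ℝ) (v : Fin b → ℝ) :
    dotProduct x (A *ᵥ v) = dotProduct (Aᵀ *ᵥ x) v := by
  rw [Matrix.dotProduct_mulVec, Matrix.mulVec_transpose]


/-- Noise confined to a known subspace im E: W = EŴ for some Ŵ satisfying the QMI
given by Φ̂ (with Φ̂₂₂ ≺ 0) iff W satisfies the QMI given by
Φ = [[EΦ̂₁₁Eᵀ, EΦ̂₁₂],[Φ̂₂₁Eᵀ, Φ̂₂₂]]. -/
theorem noise_in_subspace_qmi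
    (n d T : ℕ)
    (E : Matrix (Fin n) (Fin d) ℝ) (hE : E.rank = d)
    (F11 : Matrix (Fin d) (Fin d) ℝ) (F12 : Matrix (Fin d) (Fin T) ℝ)
    (F22 : Matrix (Fin T) (Fin T) ℝ)
    (h11 : F11ᵀ = F11) (h22 : F22ᵀ = F22)
    (hF22 : (-F22).PosDef)
    (W : Matrix (Fin n) (Fin T) ℝ) :
    (∃ Wh : Matrix (Fin d) (Fin T) ℝ, W = E * Wh ∧
      ((Matrix.fromRows (1 : Matrix (Fin d) (Fin d) ℝ) Whᵀ)ᵀ *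
        Matrix.fromBlocks F11 F12 F12ᵀ F22 *
        Matrix.fromRows (1 : Matrix (Fin d) (Fin d) ℝ) Whᵀ).PosSemidef)
    ↔ ((Matrix.fromRows (1 : Matrix (Fin n) (Fin n) ℝ) Wᵀ)ᵀ *
        Matrix.fromBlocks (E * F11 * Eᵀ) (E * F12) ((E * F12)ᵀ) F22 *
        Matrix.fromRows (1 : Matrix (Fin n) (Fin n) ℝ) Wᵀ).PosSemidef := by
  -- conjugation identity
  have conj_eq : ∀ Wh : Matrix (Fin d) (Fin T) ℝ,
      (E * F11 * Eᵀ) + (E * F12) * (E * Wh)ᵀ + (E * Wh) * (E * F12)ᵀ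
        + (E * Wh) * F22 * (E * Wh)ᵀ
      = E * (F11 + F12 * Whᵀ + Wh * F12ᵀ + Wh * F22 * Whᵀ) * Eᵀ := by
    intro Wh
    simp only [Matrix.transpose_mul, Matrix.mul_add, Matrix.add_mul, Matrix.mul_assoc]
  constructor
  · rintro ⟨Wh, rfl, hP⟩
    rw [qmi_expand'] at hP ⊢
    rw [conj_eq]
    have : Eᴴ = Eᵀ := by ext i j; simp [Matrix.conjTranspose_apply]
    rw [← this]
    exact hP.mul_mul_conjTranspose_same E
  · intro hN
    rw [qmi_expand'] at hN
    -- invertibility of EᵀE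
    have hG : IsUnit (Eᵀ * E) := by
      rw [← Matrix.mulVec_injective_iff_isUnit, ← Matrix.coe_mulVecLin,
        ← LinearMap.ker_eq_bot, Matrix.ker_mulVecLin_transpose_mul_self]
      have h := LinearMap.finrank_range_add_finrank_ker E.mulVecLin
      rw [Matrix.rank] at hE
      rw [hE, Module.finrank_pi] at h
      have h0 : Module.finrank ℝ (LinearMap.ker E.mulVecLin) = 0 := by simpa using h
      exact Submodule.finrank_eq_zero.mp h0
    have hGdet : IsUnit (Eᵀ * E).det := (Matrix.isUnit_iff_isUnit_det _).mp hG
    have hGinv : (Eᵀ * E) * (Eᵀ * E)⁻¹ = 1 := Matrix.mul_nonsing_inv _ hGdet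
    have hGinv' : (Eᵀ * E)⁻¹ * (Eᵀ * E) = 1 := Matrix.nonsing_inv_mul _ hGdet
    -- kernel containment
    have key : ∀ x : Fin n → ℝ, Eᵀ *ᵥ x = 0 → Wᵀ *ᵥ x = 0 := by
      intro x hx
      by_contra hy
      have h2 := hN.dotProduct_mulVec_nonneg x
      rw [star_trivial] at h2
      set y := Wᵀ *ᵥ x with hy'
      have hterm : dotProduct x
          (((E * F11 * Eᵀ) + (E * F12) * Wᵀ + W * (E * F12)ᵀ + W * F22 * Wᵀ) *ᵥ x)
          = dotProduct y (F22 *ᵥ y) := by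
        simp only [Matrix.add_mulVec, dotProduct_add, ← Matrix.mulVec_mulVec,
          Matrix.transpose_mul, hx]
        rw [dot_shift' E, dot_shift' E, dot_shift' W, dot_shift' W, dot_shift' F12ᵀ]
        simp [hx, ← hy']
      rw [hterm] at h2
      have h3 := hF22.dotProduct_mulVec_pos hy
      rw [star_trivial, Matrix.neg_mulVec, dotProduct_neg] at h3
      linarith
    -- construct Wh
    set Wh : Matrix (Fin d) (Fin T) ℝ := (Eᵀ * E)⁻¹ * (Eᵀ * W) with hWh
    have hEtD : Eᵀ * (W - E * Wh) = 0 := by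
      rw [Matrix.mul_sub, hWh, ← Matrix.mul_assoc, ← Matrix.mul_assoc, hGinv]
      simp [Matrix.mul_assoc]
    have hWtD : Wᵀ * (W - E * Wh) = 0 := by
      ext i j
      have hcol : Eᵀ *ᵥ (fun k => (W - E * Wh) k j) = 0 := by
        ext i'
        have := congrFun (congrFun hEtD i') j
        simpa [Matrix.mul_apply, Matrix.mulVec, dotProduct] using this
      have := congrFun (key _ hcol) i
      simpa [Matrix.mul_apply, Matrix.mulVec, dotProduct] using this
    have hD : W = E * Wh := by
      have hDD : (W - E * Wh)ᵀ * (W - E * Wh) = 0 := by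
        rw [Matrix.transpose_sub, Matrix.sub_mul, hWtD, Matrix.transpose_mul,
          Matrix.mul_assoc, hEtD]
        simp
      have hDH : (W - E * Wh)ᴴ = (W - E * Wh)ᵀ := by
        ext i j; simp [Matrix.conjTranspose_apply]
      rw [← hDH] at hDD
      have := Matrix.conjTranspose_mul_self_eq_zero.mp hDD
      rwa [sub_eq_zero] at this
    refine ⟨Wh, hD, ?_⟩
    rw [qmi_expand']
    set P := F11 + F12 * Whᵀ + Wh * F12ᵀ + Wh * F22 * Whᵀ with hP
    have hNP : (E * F11 * Eᵀ) + (E * F12) * Wᵀ + W * (E * F12)ᵀ + W * F22 * Wᵀ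
        = E * P * Eᵀ := by rw [hD]; exact conj_eq Wh
    rw [hNP] at hN
    refine Matrix.PosSemidef.of_dotProduct_mulVec_nonneg ?_ ?_
    · have : Pᴴ = Pᵀ := by ext i j; simp [Matrix.conjTranspose_apply]
      rw [Matrix.IsHermitian, this, hP]
      simp only [Matrix.transpose_add, Matrix.transpose_mul, Matrix.transpose_transpose,
        h11, h22, Matrix.mul_assoc]
      abel
    · intro yh
      have hsurj : Eᵀ *ᵥ (E *ᵥ ((Eᵀ * E)⁻¹ *ᵥ yh)) = yh := by
        rw [Matrix.mulVec_mulVec, Matrix.mulVec_mulVec, hGinv, Matrix.one_mulVec]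
      have h2 := hN.dotProduct_mulVec_nonneg (E *ᵥ ((Eᵀ * E)⁻¹ *ᵥ yh))
      rw [star_trivial] at h2
      set x := E *ᵥ ((Eᵀ * E)⁻¹ *ᵥ yh) with hx
      have : dotProduct x ((E * P * Eᵀ) *ᵥ x)
          = dotProduct yh (P *ᵥ yh) := by
        rw [← Matrix.mulVec_mulVec, ← Matrix.mulVec_mulVec, dot_shift' E, hsurj]
      rw [this] at h2
      rw [star_trivial]
      exact h2
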